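/- (Generalized Cauchy–Binet formula) Let R be a commutative ring, let A be a p×m matrix and B an m×q matrix over R, let s ≤ m, and let J be an s-element subset of Fin p and I an s-element subset of Fin q. Then det((A*B).submatrix e_J e_I) = ∑_{K} det(A.submatrix e_J e_K) · det(B.submatrix e_K e_I), where the sum runs over all s-element subsets K of Fin m. -/

import Mathlib

open Finset Matrix Equiv

theorem cb_step1 {R : Type*} [CommRing R] {m s : ℕ}
    (A : Matrix (Fin s) (Fin m) R) (B : Matrix (Fin m) (Fin s) R) :
    (A * B).det = ∑ f : Fin s → Fin m, (∏ i, A i (f i)) * (B.submatrix f id).det := by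
  have h : (A * B) = fun i => ∑ k, A i k • B k := by
    ext i j; simp [Matrix.mul_apply]
  have key := (Matrix.detRowAlternating : (Fin s → R) [⋀^Fin s]→ₗ[R] R).toMultilinearMap.map_sum
    (g := fun i k => A i k • B k)
  calc (A * B).det = Matrix.detRowAlternating (fun i => ∑ k, A i k • B k) := by rw [← h]; rfl
    _ = ∑ f : Fin s → Fin m, Matrix.detRowAlternating (fun i => A i (f i) • B (f i)) := key
    _ = ∑ f : Fin s → Fin m, (∏ i, A i (f i)) * (B.submatrix f id).det := by
        refine Finset.sum_congr rfl fun f _ => ?_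
        have := (Matrix.detRowAlternating : (Fin s → R) [⋀^Fin s]→ₗ[R] R).toMultilinearMap.map_smul_univ
          (fun i => A i (f i)) (fun i => B (f i))
        erw [this]
        rw [smul_eq_mul]
        rfl

theorem cb_core {R : Type*} [CommRing R] {m s : ℕ}
    (A : Matrix (Fin s) (Fin m) R) (B : Matrix (Fin m) (Fin s) R) :
    (A * B).det = ∑ K : {K : Finset (Fin m) // K.card = s},
      (A.submatrix id (⇑(K.1.orderEmbOfFin K.2))).det *
      (B.submatrix (⇑(K.1.orderEmbOfFin K.2)) id).det := by
  classical
  rw [cb_step1]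
  have step2 : ∑ f : Fin s → Fin m, (∏ i, A i (f i)) * (B.submatrix f id).det
      = ∑ f ∈ Finset.univ.filter (fun f : Fin s → Fin m => Function.Injective f),
          (∏ i, A i (f i)) * (B.submatrix f id).det := by
    rw [Finset.sum_filter_of_ne]
    intro f _ hne
    by_contra hinj
    apply hne
    have : (B.submatrix f id).det = 0 := by
      apply (Matrix.detRowAlternating : (Fin s → R) [⋀^Fin s]→ₗ[R] R).map_eq_zero_of_not_injective
        (fun i => B (f i))
      intro hcon
      exact hinj fun a b hab => hcon (by simp only [hab])
    rw [this, mul_zero]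
  rw [step2]
  have step3 : ∑ f ∈ Finset.univ.filter (fun f : Fin s → Fin m => Function.Injective f),
          (∏ i, A i (f i)) * (B.submatrix f id).det
      = ∑ p : {K : Finset (Fin m) // K.card = s} × Perm (Fin s),
          (∏ i, A i (p.1.1.orderEmbOfFin p.1.2 (p.2 i))) *
            (B.submatrix (⇑(p.1.1.orderEmbOfFin p.1.2) ∘ ⇑p.2) id).det := by
    refine (Finset.sum_bij (fun (p : {K : Finset (Fin m) // K.card = s} × Perm (Fin s)) _ =>
      ⇑(p.1.1.orderEmbOfFin p.1.2) ∘ ⇑p.2) ?_ ?_ ?_ ?_).symm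
    · intro p _
      simp only [Finset.mem_filter, Finset.mem_univ, true_and]
      exact (p.1.1.orderEmbOfFin p.1.2).injective.comp p.2.injective
    · intro a ha b hb h
      obtain ⟨K, σ⟩ := a
      obtain ⟨K', σ'⟩ := b
      simp only at h
      have hr : (K.1 : Set (Fin m)) = (K'.1 : Set (Fin m)) := by
        rw [← K.1.range_orderEmbOfFin K.2, ← K'.1.range_orderEmbOfFin K'.2,
          ← σ.surjective.range_comp (g := ⇑(K.1.orderEmbOfFin K.2)),
          ← σ'.surjective.range_comp (g := ⇑(K'.1.orderEmbOfFin K'.2)), h]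
      have hK : K = K' := Subtype.ext (Finset.coe_injective hr)
      subst hK
      refine Prod.ext rfl (Equiv.ext fun i => (K.1.orderEmbOfFin K.2).injective ?_)
      exact congrFun h i
    · intro f hf
      rw [Finset.mem_filter] at hf
      have hfi := hf.2
      set K : Finset (Fin m) := Finset.univ.image f with hKdef
      have hK : K.card = s := by
        rw [hKdef, Finset.card_image_of_injective _ hfi, Finset.card_univ, Fintype.card_fin]
      have hmem : ∀ i, f i ∈ K := fun i => Finset.mem_image_of_mem f (Finset.mem_univ i)
      set g : Fin s → Fin s := fun i => (K.orderIsoOfFin hK).symm ⟨f i, hmem i⟩ with hg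
      have hginj : Function.Injective g := fun a b hab => by
        have h2 := congrArg (fun x => ((K.orderIsoOfFin hK) x : Fin m)) hab
        simp only [hg, OrderIso.apply_symm_apply] at h2
        exact hfi h2
      refine ⟨⟨⟨K, hK⟩, Equiv.ofBijective g (Finite.injective_iff_bijective.mp hginj)⟩,
        Finset.mem_univ _, ?_⟩
      funext i
      show K.orderEmbOfFin hK (g i) = f i
      rw [← Finset.coe_orderIsoOfFin_apply, hg]
      simp
    · intro p _
      rfl
  rw [step3, Fintype.sum_prod_type]
  refine Finset.sum_congr rfl fun K _ => ?_
  have hB : ∀ σ : Perm (Fin s),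
      (B.submatrix (⇑(K.1.orderEmbOfFin K.2) ∘ ⇑σ) id).det
        = (Perm.sign σ : R) * (B.submatrix (⇑(K.1.orderEmbOfFin K.2)) id).det := by
    intro σ
    rw [show B.submatrix (⇑(K.1.orderEmbOfFin K.2) ∘ ⇑σ) id
        = (B.submatrix (⇑(K.1.orderEmbOfFin K.2)) id).submatrix σ id from rfl,
      Matrix.det_permute]
  simp only [hB]
  have hA : (A.submatrix id (⇑(K.1.orderEmbOfFin K.2))).det
      = ∑ σ : Perm (Fin s), (Perm.sign σ : R) * ∏ i, A i (K.1.orderEmbOfFin K.2 (σ i)) := by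
    rw [← Matrix.det_transpose, Matrix.det_apply']
    rfl
  rw [hA, Finset.sum_mul]
  refine Finset.sum_congr rfl fun σ _ => ?_
  ring


/-- Generalized Cauchy–Binet formula: for a `p×m` matrix `A` and an `m×q` matrix
`B` over a commutative ring, `s ≤ m`, an `s`-element subset `J` of `Fin p` and an
`s`-element subset `I` of `Fin q`, the `(J,I)` minor of `A*B` of order `s` equals
the sum over all `s`-element subsets `K` of `Fin m` of the products of the
corresponding minors of `A` and `B`. -/
theorem generalized_cauchy_binet {R : Type*} [CommRing R] {p m q : ℕ}
    (A : Matrix (Fin p) (Fin m) R) (B : Matrix (Fin m) (Fin q) R) (s : ℕ)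
    (hs : s ≤ m) (J : Finset (Fin p)) (hJ : J.card = s)
    (I : Finset (Fin q)) (hI : I.card = s) :
    ((A * B).submatrix (⇑(J.orderEmbOfFin hJ)) (⇑(I.orderEmbOfFin hI))).det
      = ∑ K : {K : Finset (Fin m) // K.card = s},
          (A.submatrix (⇑(J.orderEmbOfFin hJ)) (⇑(K.1.orderEmbOfFin K.2))).det *
            (B.submatrix (⇑(K.1.orderEmbOfFin K.2)) (⇑(I.orderEmbOfFin hI))).det := by
  have h1 : (A * B).submatrix (⇑(J.orderEmbOfFin hJ)) (⇑(I.orderEmbOfFin hI))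
      = (A.submatrix (⇑(J.orderEmbOfFin hJ)) id) * (B.submatrix id (⇑(I.orderEmbOfFin hI))) := by
    rw [← Matrix.submatrix_mul_equiv A B _ (Equiv.refl (Fin m)) _]
    rfl
  rw [h1, cb_core]
  refine Finset.sum_congr rfl fun K _ => ?_
  rw [Matrix.submatrix_submatrix, Matrix.submatrix_submatrix]
  simp [Function.comp]
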